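/- Let n ≥ 3 be an integer, let λ = e^{2πi/n} ∈ ℂ, and consider the 3×3 complex matrices A = [[0,λ,0],[λ⁻¹,0,0],[0,0,1]] and C = [[0,0,1],[0,1,0],[λ⁻¹,0,0]], and set S₂ = Cⁿ A. If n is odd, then the smallest positive integer k such that S₂^k is a scalar multiple of the 3×3 identity matrix equals 3; if n is even, then the smallest such k equals 4. -/

import Mathlib

open Complex

theorem stmt_19 (n : ℕ) (hn : 3 ≤ n) :
    let lam : ℂ := Complex.exp (2 * Real.pi * Complex.I / n)
    let A : Matrix (Fin 3) (Fin 3) ℂ := !![0, lam, 0; lam⁻¹, 0, 0; 0, 0, 1]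
    let C : Matrix (Fin 3) (Fin 3) ℂ := !![0, 0, 1; 0, 1, 0; lam⁻¹, 0, 0]
    let S₂ : Matrix (Fin 3) (Fin 3) ℂ := C ^ n * A
    (Odd n → IsLeast {k : ℕ | 0 < k ∧
      ∃ c : ℂ, S₂ ^ k = c • (1 : Matrix (Fin 3) (Fin 3) ℂ)} 3) ∧
    (Even n → IsLeast {k : ℕ | 0 < k ∧
      ∃ c : ℂ, S₂ ^ k = c • (1 : Matrix (Fin 3) (Fin 3) ℂ)} 4) := by
  intro lam A C S₂
  have hn0 : (n : ℂ) ≠ 0 := Nat.cast_ne_zero.mpr (by omega)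
  have hlam0 : lam ≠ 0 := Complex.exp_ne_zero _
  have hinv0 : lam⁻¹ ≠ 0 := inv_ne_zero hlam0
  have hlamn : lam ^ n = 1 := by
    show Complex.exp _ ^ n = 1
    rw [← Complex.exp_nat_mul,
      show (n : ℂ) * (2 * Real.pi * Complex.I / n) = 2 * Real.pi * Complex.I by
        field_simp, Complex.exp_two_pi_mul_I]
  have hC2 : C ^ 2 = !![lam⁻¹, 0, 0; 0, 1, 0; 0, 0, lam⁻¹] := by
    rw [pow_two]
    show (!![0, 0, 1; 0, 1, 0; lam⁻¹, 0, 0] : Matrix (Fin 3) (Fin 3) ℂ) * _ = _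
    rw [Matrix.mul_fin_three]; norm_num
  have hC2k : ∀ k : ℕ, C ^ (2 * k) = !![lam⁻¹ ^ k, 0, 0; 0, 1, 0; 0, 0, lam⁻¹ ^ k] := by
    intro k
    induction k with
    | zero => simp [Matrix.one_fin_three]
    | succ k ih =>
      rw [mul_add, mul_one, pow_add, ih, hC2, Matrix.mul_fin_three, pow_succ]
      norm_num
  have hinvmul : lam⁻¹ * lam = 1 := inv_mul_cancel₀ hlam0
  have hinvn : lam⁻¹ ^ n = 1 := by rw [inv_pow, hlamn, inv_one]
  constructor
  · -- odd case
    rintro ⟨m, hm⟩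
    set a : ℂ := lam⁻¹ ^ m with ha
    have ha0 : a ≠ 0 := pow_ne_zero _ hinv0
    have hS2 : S₂ = !![0, 0, a; lam⁻¹, 0, 0; 0, a, 0] := by
      show C ^ n * A = _
      rw [hm, pow_succ, hC2k m]
      show _ * C * A = _
      show _ * (!![0, 0, 1; 0, 1, 0; lam⁻¹, 0, 0] : Matrix (Fin 3) (Fin 3) ℂ)
        * (!![0, lam, 0; lam⁻¹, 0, 0; 0, 0, 1] : Matrix (Fin 3) (Fin 3) ℂ) = _
      rw [Matrix.mul_fin_three, Matrix.mul_fin_three]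
      norm_num [mul_assoc, hinvmul]
      simp [ha, inv_pow]
    have key : a * a * lam⁻¹ = 1 := by
      have : a * a * lam⁻¹ = lam⁻¹ ^ n := by
        rw [hm, two_mul, pow_succ, pow_add]
      rw [this, hinvn]
    have hS3 : S₂ ^ 3 = 1 := by
      rw [show S₂ ^ 3 = S₂ * S₂ * S₂ by rw [pow_succ, pow_two], hS2,
        Matrix.mul_fin_three, Matrix.mul_fin_three, Matrix.one_fin_three]
      norm_num
      rw [show lam⁻¹ * a * a = a * a * lam⁻¹ by ring, show a * lam⁻¹ * a = a * a * lam⁻¹ by ring, key]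
      exact ⟨rfl, rfl, rfl⟩
    constructor
    · exact ⟨by norm_num, 1, by rw [hS3, one_smul]⟩
    · rintro k ⟨hk, c, hc⟩
      by_contra h
      push_neg at h
      interval_cases k
      · rw [pow_one, hS2] at hc
        have := congrFun (congrFun hc 1) 0
        simp [Matrix.one_apply] at this
        exact hlam0 this
      · rw [pow_two, hS2, Matrix.mul_fin_three] at hc
        have := congrFun (congrFun hc 0) 1
        simp [Matrix.one_apply] at this
        exact ha0 this
  · -- even case
    rintro ⟨m, hm⟩
    have hm' : n = 2 * m := by omega
    have hm0 : m ≠ 0 := by omega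
    have hlamm : lam ^ m = -1 := by
      show Complex.exp _ ^ m = -1
      rw [← Complex.exp_nat_mul,
        show (m : ℂ) * (2 * Real.pi * Complex.I / n) = Real.pi * Complex.I by
          rw [hm']; push_cast; field_simp [Nat.cast_ne_zero.mpr hm0],
        Complex.exp_pi_mul_I]
    have hinvm : lam⁻¹ ^ m = -1 := by
      rw [inv_pow, hlamm]; norm_num
    have hS2 : S₂ = !![0, -lam, 0; lam⁻¹, 0, 0; 0, 0, -1] := by
      show C ^ n * A = _
      rw [hm', hC2k m, hinvm]
      show (!![(-1 : ℂ), 0, 0; 0, 1, 0; 0, 0, -1] : Matrix (Fin 3) (Fin 3) ℂ)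
        * (!![0, lam, 0; lam⁻¹, 0, 0; 0, 0, 1] : Matrix (Fin 3) (Fin 3) ℂ) = _
      rw [Matrix.mul_fin_three]; norm_num
    have hmul : lam * lam⁻¹ = 1 := mul_inv_cancel₀ hlam0
    have hSq : S₂ ^ 2 = !![-1, 0, 0; 0, -1, 0; 0, 0, 1] := by
      rw [pow_two, hS2, Matrix.mul_fin_three]
      norm_num [hmul, hinvmul]
    have hS4 : S₂ ^ 4 = 1 := by
      rw [show S₂ ^ 4 = S₂ ^ 2 * S₂ ^ 2 by rw [← pow_add], hSq,
        Matrix.mul_fin_three, Matrix.one_fin_three]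
      norm_num
    constructor
    · exact ⟨by norm_num, 1, by rw [hS4, one_smul]⟩
    · rintro k ⟨hk, c, hc⟩
      by_contra h
      push_neg at h
      interval_cases k
      · rw [pow_one, hS2] at hc
        have := congrFun (congrFun hc 1) 0
        simp [Matrix.one_apply] at this
        exact hlam0 this
      · rw [hSq] at hc
        have h1 := congrFun (congrFun hc 0) 0
        have h2 := congrFun (congrFun hc 2) 2
        simp [Matrix.one_apply] at h1 h2
        rw [← h1] at h2
        norm_num at h2
      · rw [show S₂ ^ 3 = S₂ ^ 2 * S₂ by rw [pow_succ], hSq, hS2,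
          Matrix.mul_fin_three] at hc
        have := congrFun (congrFun hc 0) 1
        simp [Matrix.one_apply] at this
        exact hlam0 this
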